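/- arXiv:2309.02063 — 4 statements merged into one kernel-verified Lean document; each statement's English description precedes it below -/
import Mathlib

section
/- Let Φ : Mat₂(ℂ) → Mat₂(ℂ) be a ℂ-linear map that is unital, i.e. Φ(I) = I, and let U be a 2×2 unitary matrix with associated conjugation superoperator Ad_U : ρ ↦ UρU†. Let ρ₀⁽ʲ⁾ = (1/2)(I + σ_j) for j = 1,2,3 (the density matrices whose Bloch vectors are the standard basis vectors e₁, e₂, e₃ of ℝ³). Then ‖Φ − Ad_U‖²_HS = 6 · (1/3) Σ_{j=1}^{3} ‖Φ(ρ₀⁽ʲ⁾) − Uρ₀⁽ʲ⁾U†‖²_HS, i.e. the squared Hilbert–Schmidt distance between the superoperators equals six times the mean squared Hilbert–Schmidt distance of their actions on the three states ρ₀⁽¹⁾, ρ₀⁽²⁾, ρ₀⁽³⁾. -/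
open Matrix

noncomputable section

/-- The Pauli matrices `σ₀ = I, σ₁ = σ_x, σ₂ = σ_y, σ₃ = σ_z`. -/
def pauli : Fin 4 → Matrix (Fin 2) (Fin 2) ℂ
  | 0 => 1
  | 1 => !![0, 1; 1, 0]
  | 2 => !![0, -Complex.I; Complex.I, 0]
  | 3 => !![1, 0; 0, -1]

/-- Squared Hilbert–Schmidt norm `‖A‖² = Tr(A†A)` of a 2×2 complex matrix. -/
def hsSq (A : Matrix (Fin 2) (Fin 2) ℂ) : ℂ := (Aᴴ * A).trace

/-- The density matrices `ρ₀⁽ʲ⁾ = (1/2)(I + σ_j)`, j = 1,2,3, whose Bloch vectors are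
the standard basis vectors of ℝ³. -/
def rho0 (j : Fin 3) : Matrix (Fin 2) (Fin 2) ℂ := (2 : ℂ)⁻¹ • (1 + pauli j.succ)

lemma hsSq_smul (c : ℂ) (A : Matrix (Fin 2) (Fin 2) ℂ) :
    hsSq (c • A) = star c * c * hsSq A := by
  simp only [hsSq, Matrix.conjTranspose_smul, Matrix.smul_mul, Matrix.mul_smul,
    Matrix.trace_smul, smul_smul, smul_eq_mul]
  ring

/-- For a unital linear superoperator `Φ` on 2×2 matrices and a unitary `U`, the squared
Hilbert–Schmidt distance between `Φ` and `Ad_U : ρ ↦ UρU†` (computed in the orthonormal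
basis `σ_i/√2`) equals six times the mean squared Hilbert–Schmidt distance of their actions
on the three states `ρ₀⁽ʲ⁾ = (1/2)(I + σ_j)`. -/
theorem hs_dist_superop_eq_six_mul_mean_of_unital
    (Φ : Matrix (Fin 2) (Fin 2) ℂ →ₗ[ℂ] Matrix (Fin 2) (Fin 2) ℂ)
    (hΦ : Φ 1 = 1)
    (U : Matrix (Fin 2) (Fin 2) ℂ) (hU : U ∈ Matrix.unitaryGroup (Fin 2) ℂ) :
    ∑ i : Fin 4, hsSq (((Real.sqrt 2 : ℂ))⁻¹ • (Φ (pauli i) - U * pauli i * Uᴴ)) =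
      6 * ((3 : ℂ)⁻¹ * ∑ j : Fin 3, hsSq (Φ (rho0 j) - U * rho0 j * Uᴴ)) := by
  have hUU : U * Uᴴ = 1 := by
    have := (Matrix.mem_unitaryGroup_iff).mp hU
    simpa [Matrix.star_eq_conjTranspose] using this
  have hdiff : ∀ j : Fin 3,
      Φ (rho0 j) - U * rho0 j * Uᴴ
        = (2 : ℂ)⁻¹ • (Φ (pauli j.succ) - U * pauli j.succ * Uᴴ) := by
    intro j
    have h1 : Φ (rho0 j) = (2 : ℂ)⁻¹ • ((1 : Matrix (Fin 2) (Fin 2) ℂ) + Φ (pauli j.succ)) := by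
      rw [rho0, _root_.map_smul, map_add, hΦ]
    have h2 : U * rho0 j * Uᴴ
        = (2 : ℂ)⁻¹ • ((1 : Matrix (Fin 2) (Fin 2) ℂ) + U * pauli j.succ * Uᴴ) := by
      rw [rho0]
      rw [Matrix.mul_smul, Matrix.smul_mul, Matrix.mul_add, Matrix.add_mul, Matrix.mul_one, hUU]
    rw [h1, h2, ← smul_sub]
    congr 1
    abel
  have hc : star ((Real.sqrt 2 : ℂ))⁻¹ * ((Real.sqrt 2 : ℂ))⁻¹ = (2 : ℂ)⁻¹ := by
    rw [Complex.star_def, ← Complex.ofReal_inv, Complex.conj_ofReal, ← Complex.ofReal_mul,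
      ← mul_inv, Real.mul_self_sqrt (by norm_num)]
    norm_num
  have hc2 : star ((2 : ℂ))⁻¹ * ((2 : ℂ))⁻¹ = (4 : ℂ)⁻¹ := by
    have : (starRingEnd ℂ) (2 : ℂ) = 2 := by
      simp [Complex.ext_iff]
    rw [Complex.star_def, map_inv₀, this]
    norm_num
  have hz : hsSq (0 : Matrix (Fin 2) (Fin 2) ℂ) = 0 := by simp [hsSq]
  have h0 : Φ (pauli 0) - U * pauli 0 * Uᴴ = 0 := by
    show Φ 1 - U * 1 * Uᴴ = 0
    rw [hΦ, Matrix.mul_one, hUU, sub_self]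
  rw [Fin.sum_univ_four, Fin.sum_univ_three, h0, smul_zero]
  have e1 : (1 : Fin 4) = (0 : Fin 3).succ := rfl
  have e2 : (2 : Fin 4) = (1 : Fin 3).succ := rfl
  have e3 : (3 : Fin 4) = (2 : Fin 3).succ := rfl
  rw [e1, e2, e3, hdiff 0, hdiff 1, hdiff 2]
  simp only [hsSq_smul, hc, hc2, hz]
  ring
end
end

section
/- Let A : ℝ → Mat_n(ℂ) be differentiable at x with derivative A'(x). Then the matrix exponential x ↦ e^{A(x)} is differentiable at x and d/dx e^{A(x)} = ∫₀¹ e^{s A(x)} A'(x) e^{(1−s) A(x)} ds. -/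
open Matrix NormedSpace

noncomputable section

open intervalIntegral Set Filter MeasureTheory
open scoped Topology

namespace WilcoxLinfty
attribute [local instance] Matrix.linftyOpNormedRing Matrix.linftyOpNormedAlgebra

variable {n : ℕ}

lemma exp_cont : Continuous (exp : Matrix (Fin n) (Fin n) ℂ → Matrix (Fin n) (Fin n) ℂ) :=
  exp_continuous

lemma slope_G (B C : Matrix (Fin n) (Fin n) ℂ) (s : ℝ) :
    Tendsto (slope (fun t : ℝ => exp (t • B) * exp ((1 - t) • C)) s) (𝓝[≠] s)
      (𝓝 (exp (s • B) * (B - C) * exp ((1 - s) • C))) := by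
  have h1 : HasDerivAt (fun t : ℝ => exp (t • B)) (exp (s • B) * B) s := by
    have h := hasDerivAt_exp_smul_const (𝕂 := ℝ) B s
    exact h
  have h3 : HasDerivAt (fun u : ℝ => exp (u • C)) (C * exp ((1 - s) • C)) (1 - s) := by
    have h := hasDerivAt_exp_smul_const' (𝕂 := ℝ) C (1 - s)
    exact h
  have h4 : HasDerivAt (fun t : ℝ => 1 - t) (-1) s := (hasDerivAt_id s).const_sub 1
  have h2 : HasDerivAt (fun t : ℝ => exp ((1 - t) • C))
      ((-1 : ℝ) • (C * exp ((1 - s) • C))) s := h3.scomp s h4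
  have h5 := h1.mul h2
  apply hasDerivAt_iff_tendsto_slope.mp
  convert h5 using 1
  · rfl
  · rfl
  simp only [neg_one_smul, mul_neg]
  noncomm_ring

end WilcoxLinfty

attribute [local instance] Matrix.normedAddCommGroup Matrix.normedSpace

section WilcoxSup

variable {n : ℕ}

lemma sup_exp_cont : Continuous (exp : Matrix (Fin n) (Fin n) ℂ → Matrix (Fin n) (Fin n) ℂ) :=
  WilcoxLinfty.exp_cont

/-- Derivative of `t ↦ exp (t•B) * exp ((1-t)•C)`, transferred to the sup-norm instances. -/
lemma sup_hasDerivAt_G (B C : Matrix (Fin n) (Fin n) ℂ) (s : ℝ) :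
    HasDerivAt (fun t : ℝ => exp (t • B) * exp ((1 - t) • C))
      (exp (s • B) * (B - C) * exp ((1 - s) • C)) s := by
  refine hasDerivAt_iff_tendsto_slope.mpr ?_
  exact WilcoxLinfty.slope_G B C s

lemma sup_cont_integrand (B C : Matrix (Fin n) (Fin n) ℂ) :
    Continuous fun s : ℝ => exp (s • B) * (B - C) * exp ((1 - s) • C) := by
  have e1 : Continuous fun s : ℝ => exp (s • B) :=
    sup_exp_cont.comp (continuous_id.smul continuous_const)
  have e2 : Continuous fun s : ℝ => exp ((1 - s) • C) :=
    sup_exp_cont.comp ((continuous_const.sub continuous_id).smul continuous_const)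
  exact (e1.matrix_mul continuous_const).matrix_mul e2

/-- Duhamel's formula: `exp B - exp C = ∫₀¹ e^{sB} (B - C) e^{(1-s)C} ds`. -/
lemma duhamel (B C : Matrix (Fin n) (Fin n) ℂ) :
    exp B - exp C = ∫ s in (0:ℝ)..1, exp (s • B) * (B - C) * exp ((1 - s) • C) := by
  have h := intervalIntegral.integral_eq_sub_of_hasDerivAt
    (f := fun t : ℝ => exp (t • B) * exp ((1 - t) • C))
    (fun s _ => sup_hasDerivAt_G B C s)
    ((sup_cont_integrand B C).intervalIntegrable 0 1)
  rw [h]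
  norm_num [exp_zero]

lemma contPhi (K : Matrix (Fin n) (Fin n) ℂ) :
    Continuous (fun p : Matrix (Fin n) (Fin n) ℂ × Matrix (Fin n) (Fin n) ℂ =>
      ∫ s in (0:ℝ)..1, exp (s • p.1) * p.2 * exp ((1 - s) • K)) := by
  apply intervalIntegral.continuous_parametric_intervalIntegral_of_continuous' (μ := volume)
  have e1 : Continuous fun q : (Matrix (Fin n) (Fin n) ℂ × Matrix (Fin n) (Fin n) ℂ) × ℝ =>
      exp (q.2 • q.1.1) :=
    sup_exp_cont.comp (continuous_snd.smul (continuous_fst.fst))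
  have e2 : Continuous fun q : (Matrix (Fin n) (Fin n) ℂ × Matrix (Fin n) (Fin n) ℂ) × ℝ =>
      exp ((1 - q.2) • K) :=
    sup_exp_cont.comp ((continuous_const.sub continuous_snd).smul continuous_const)
  exact (e1.matrix_mul (continuous_fst.snd)).matrix_mul e2

end WilcoxSup

/-- Wilcox integral formula: if `A : ℝ → Mat_n(ℂ)` is differentiable at `x` with derivative
`A'`, then `x ↦ e^{A(x)}` is differentiable at `x` and
`d/dx e^{A(x)} = ∫₀¹ e^{s A(x)} A'(x) e^{(1−s) A(x)} ds`. -/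
theorem wilcox_deriv_exp {n : ℕ} (A : ℝ → Matrix (Fin n) (Fin n) ℂ)
    (A' : Matrix (Fin n) (Fin n) ℂ) (x : ℝ) (hA : HasDerivAt A A' x) :
    HasDerivAt (fun y => exp (A y))
      (∫ s in (0:ℝ)..1, exp (s • A x) * A' * exp ((1 - s) • A x)) x := by
  refine hasDerivAt_iff_tendsto_slope.mpr ?_
  have h1 : Tendsto (fun y => (A y, slope A x y)) (𝓝[≠] x) (𝓝 (A x, A')) :=
    (hA.continuousAt.tendsto.mono_left nhdsWithin_le_nhds).prodMk_nhds
      (hasDerivAt_iff_tendsto_slope.mp hA)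
  have h2 := ((contPhi (A x)).continuousAt (x := (A x, A'))).tendsto.comp h1
  refine h2.congr' ?_
  filter_upwards [self_mem_nhdsWithin] with y (hy : y ≠ x)
  show ∫ s in (0:ℝ)..1, exp (s • A y) * slope A x y * exp ((1 - s) • A x)
      = slope (fun y => exp (A y)) x y
  rw [slope_def_module (fun y => exp (A y)) x y, duhamel (A y) (A x),
    ← intervalIntegral.integral_smul]
  refine intervalIntegral.integral_congr fun s _ => ?_
  rw [slope_def_module A x y]
  rw [mul_smul_comm, smul_mul_assoc]
end
end

section
/- Let B, Bᵘ, Bⁿ be fixed n×n real matrices, Δt > 0, and for u, n ∈ ℝ set A(u) = B + u Bᵘ + n Bⁿ (n fixed). Then the map u ↦ e^{A(u)Δt} is differentiable and ∂/∂u e^{A(u)Δt} = ∫₀^{Δt} e^{A(u) t} Bᵘ e^{A(u)(Δt − t)} dt. -/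
open Matrix NormedSpace

noncomputable section

section helpers

attribute [local instance] Matrix.linftyOpNormedRing Matrix.linftyOpNormedAlgebra

variable {d : ℕ}

lemma exp_cont' : Continuous (exp : Matrix (Fin d) (Fin d) ℝ → _) :=
  NormedSpace.exp_continuous

lemma duhamel_slope (M N : Matrix (Fin d) (Fin d) ℝ) (T t : ℝ) :
    Filter.Tendsto (slope (fun s : ℝ => exp (s • M) * exp ((T - s) • N)) t)
      (nhdsWithin t {t}ᶜ)
      (nhds (exp (t • M) * (M - N) * exp ((T - t) • N))) := by
  have h1 : HasDerivAt (fun s : ℝ => exp (s • M)) (exp (t • M) * M) t :=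
    hasDerivAt_exp_smul_const M t
  have hc : HasDerivAt (fun s : ℝ => T - s) (-1 : ℝ) t := by
    simpa using (hasDerivAt_id t).const_sub T
  have h2 : HasDerivAt (fun s : ℝ => exp ((T - s) • N))
      (-(N * exp ((T - t) • N))) t := by
    have := (hasDerivAt_exp_smul_const' (𝕂 := ℝ) N (T - t)).scomp t hc
    simp only [Function.comp_def, neg_one_smul] at this
    exact this
  have h := h1.mul h2
  rw [hasDerivAt_iff_tendsto_slope] at h
  have heq : exp (t • M) * (M - N) * exp ((T - t) • N)
      = exp (t • M) * M * exp ((T - t) • N)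
        + exp (t • M) * -(N * exp ((T - t) • N)) := by
    noncomm_ring
  rw [heq]
  exact h

end helpers

attribute [local instance] Matrix.normedAddCommGroup Matrix.normedSpace

section main

variable {d : ℕ}

lemma duhamel_s10 (M N : Matrix (Fin d) (Fin d) ℝ) (T : ℝ) :
    exp (T • M) - exp (T • N)
      = ∫ t in (0:ℝ)..T, exp (t • M) * (M - N) * exp ((T - t) • N) := by
  have hcont : Continuous
      (fun t : ℝ => exp (t • M) * (M - N) * exp ((T - t) • N)) := by
    refine ((Continuous.mul ?_ continuous_const).mul ?_)
    · exact exp_cont'.comp (continuous_id.smul continuous_const)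
    · exact exp_cont'.comp ((continuous_const.sub continuous_id).smul continuous_const)
  have hderiv : ∀ t ∈ Set.uIcc (0:ℝ) T,
      HasDerivAt (fun s : ℝ => exp (s • M) * exp ((T - s) • N))
        (exp (t • M) * (M - N) * exp ((T - t) • N)) t :=
    fun t _ => hasDerivAt_iff_tendsto_slope.mpr (duhamel_slope M N T t)
  have key := intervalIntegral.integral_eq_sub_of_hasDerivAt hderiv
    (hcont.intervalIntegrable 0 T)
  rw [key]
  simp [exp_zero]

/-- For `A(u) = B + u Bᵘ + n Bⁿ` (affine in the scalar control `u`, with `n` fixed) and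
`Δt > 0`, the map `u ↦ e^{A(u)Δt}` is differentiable and
`∂/∂u e^{A(u)Δt} = ∫₀^{Δt} e^{A(u) t} Bᵘ e^{A(u)(Δt − t)} dt`. -/
theorem deriv_exp_affine_control {d : ℕ} (B Bu Bn : Matrix (Fin d) (Fin d) ℝ)
    (Δt : ℝ) (hΔt : 0 < Δt) (n : ℝ) (u : ℝ) :
    HasDerivAt (fun v : ℝ => exp (Δt • (B + v • Bu + n • Bn)))
      (∫ t in (0:ℝ)..Δt,
        exp (t • (B + u • Bu + n • Bn)) * Bu *
          exp ((Δt - t) • (B + u • Bu + n • Bn))) u := by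
  set A : ℝ → Matrix (Fin d) (Fin d) ℝ := fun v => B + v • Bu + n • Bn with hA
  set G : ℝ → Matrix (Fin d) (Fin d) ℝ := fun v =>
    ∫ t in (0:ℝ)..Δt, exp (t • A v) * Bu * exp ((Δt - t) • A u) with hG
  have key : ∀ v : ℝ,
      exp (Δt • A v) - exp (Δt • A u) = (v - u) • G v := by
    intro v
    rw [duhamel_s10]
    have hAv : A v - A u = (v - u) • Bu := by
      simp only [hA, sub_smul]
      abel
    simp_rw [hAv, mul_smul_comm, smul_mul_assoc, intervalIntegral.integral_smul]
    rfl
  have hAcont : Continuous A := by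
    exact (continuous_const.add (continuous_id.smul continuous_const)).add continuous_const
  have hGcont : Continuous G := by
    apply intervalIntegral.continuous_parametric_intervalIntegral_of_continuous'
    have : @ContinuousMul (Matrix (Fin d) (Fin d) ℝ) PseudoMetricSpace.toUniformSpace.toTopologicalSpace _ :=
      ⟨(continuous_mul : Continuous fun p : Matrix (Fin d) (Fin d) ℝ × Matrix (Fin d) (Fin d) ℝ => p.1 * p.2)⟩
    refine (Continuous.mul (Continuous.mul ?_ continuous_const) ?_)
    · exact exp_cont'.comp (continuous_snd.smul (hAcont.comp continuous_fst))
    · exact exp_cont'.comp ((continuous_const.sub continuous_snd).smul continuous_const)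
  refine hasDerivAt_iff_tendsto_slope.mpr ?_
  have hG2 : Filter.Tendsto G (nhdsWithin u {u}ᶜ) (nhds (G u)) :=
    hGcont.continuousAt.tendsto.mono_left nhdsWithin_le_nhds
  refine hG2.congr' ?_
  filter_upwards [self_mem_nhdsWithin] with v hv
  have hvu : v - u ≠ 0 := sub_ne_zero.mpr hv
  rw [slope_def_module, key v, smul_smul, inv_mul_cancel₀ hvu, one_smul]

end main
end
end

section
/- Let ψ, φ ∈ ℂ² be unit vectors with ⟨ψ, φ⟩ ≠ 0 and |ψ⟩⟨ψ| ≠ |φ⟩⟨φ| (i.e. the two pure states are distinct and non-orthogonal). If two 2×2 unitary matrices U and V satisfy U|ψ⟩⟨ψ|U† = V|ψ⟩⟨ψ|V† and U|φ⟩⟨φ|U† = V|φ⟩⟨φ|V†, then there exists c ∈ ℂ with |c| = 1 such that U = cV; equivalently, UρU† = VρV† for every 2×2 matrix ρ. Thus any two distinct non-orthogonal pure qubit states distinguish unitary operations. -/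
open Matrix

noncomputable section

/-- The rank-one projection `|ψ⟩⟨ψ|` onto a vector `ψ ∈ ℂ²`. -/
def proj (ψ : Fin 2 → ℂ) : Matrix (Fin 2) (Fin 2) ℂ :=
  Matrix.vecMulVec ψ (star ψ)

lemma conj_proj (W : Matrix (Fin 2) (Fin 2) ℂ) (ψ : Fin 2 → ℂ) :
    W * proj ψ * Wᴴ = proj (W.mulVec ψ) := by
  ext i j
  simp [proj, Matrix.mul_apply, Matrix.vecMulVec_apply, Matrix.mulVec, dotProduct,
    Matrix.conjTranspose_apply, Finset.sum_mul, Finset.mul_sum, map_sum]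
  fin_cases i <;> fin_cases j <;> simp <;> ring_nf

lemma vmv_mulVec (u v w : Fin 2 → ℂ) :
    (Matrix.vecMulVec u v).mulVec w = (v ⬝ᵥ w) • u := by
  ext i
  simp [Matrix.mulVec, Matrix.vecMulVec_apply, dotProduct, Finset.sum_mul, smul_eq_mul]
  ring

lemma unitary_inner (W : Matrix (Fin 2) (Fin 2) ℂ)
    (hW : W ∈ Matrix.unitaryGroup (Fin 2) ℂ) (x y : Fin 2 → ℂ) :
    star (W.mulVec x) ⬝ᵥ (W.mulVec y) = star x ⬝ᵥ y := by
  rw [Matrix.star_mulVec, ← Matrix.dotProduct_mulVec, Matrix.mulVec_mulVec,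
    show Wᴴ * W = 1 from by simpa [Matrix.star_eq_conjTranspose] using hW.1, Matrix.one_mulVec]

lemma eigen_of_proj_eq (x ψ : Fin 2 → ℂ) (hψ : star ψ ⬝ᵥ ψ = 1)
    (h : proj x = proj ψ) : ∃ a : ℂ, x = a • ψ := by
  have h' := congrArg (fun M => Matrix.mulVec M ψ) h
  simp only [proj, vmv_mulVec, hψ, one_smul] at h'
  set t := star x ⬝ᵥ ψ with ht
  have htne : t ≠ 0 := by
    intro h0
    rw [h0, zero_smul] at h'
    rw [← h'] at hψ
    simp at hψ
  exact ⟨t⁻¹, by rw [← h', smul_smul, inv_mul_cancel₀ htne, one_smul]⟩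

/-- Two distinct non-orthogonal pure qubit states distinguish unitary operations: if unit
vectors `ψ, φ` satisfy `⟨ψ,φ⟩ ≠ 0` and `|ψ⟩⟨ψ| ≠ |φ⟩⟨φ|`, and unitaries `U, V` agree under
conjugation on both projections, then `U = cV` for some phase `c` (`|c| = 1`); equivalently
`UρU† = VρV†` for every 2×2 matrix `ρ`. -/
theorem nonorthogonal_states_distinguish_unitaries
    (ψ φ : Fin 2 → ℂ)
    (hψ : star ψ ⬝ᵥ ψ = 1) (hφ : star φ ⬝ᵥ φ = 1)
    (hno : star ψ ⬝ᵥ φ ≠ 0) (hne : proj ψ ≠ proj φ)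
    (U V : Matrix (Fin 2) (Fin 2) ℂ)
    (hU : U ∈ Matrix.unitaryGroup (Fin 2) ℂ) (hV : V ∈ Matrix.unitaryGroup (Fin 2) ℂ)
    (h1 : U * proj ψ * Uᴴ = V * proj ψ * Vᴴ)
    (h2 : U * proj φ * Uᴴ = V * proj φ * Vᴴ) :
    (∃ c : ℂ, ‖c‖ = 1 ∧ U = c • V) ∧
    ∀ ρ : Matrix (Fin 2) (Fin 2) ℂ, U * ρ * Uᴴ = V * ρ * Vᴴ := by
  -- W = Vᴴ U is unitary and fixes both projections
  set W := Vᴴ * U with hWdef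
  have hWmem : W ∈ Matrix.unitaryGroup (Fin 2) ℂ := by
    rw [hWdef, ← Matrix.star_eq_conjTranspose]
    exact mul_mem (Unitary.star_mem hV) hU
  have hVVH : V * Vᴴ = 1 := by simpa [Matrix.star_eq_conjTranspose] using hV.2
  have hVHV : Vᴴ * V = 1 := by simpa [Matrix.star_eq_conjTranspose] using hV.1
  have key : ∀ ξ : Fin 2 → ℂ, U * proj ξ * Uᴴ = V * proj ξ * Vᴴ →
      proj (W.mulVec ξ) = proj ξ := by
    intro ξ hξ
    have : W * proj ξ * Wᴴ = proj ξ := by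
      rw [hWdef]
      have : Vᴴ * (U * proj ξ * Uᴴ) * V = Vᴴ * (V * proj ξ * Vᴴ) * V := by rw [hξ]
      calc Vᴴ * U * proj ξ * (Vᴴ * U)ᴴ
          = Vᴴ * (U * proj ξ * Uᴴ) * V := by
            simp [Matrix.conjTranspose_mul, Matrix.mul_assoc]
        _ = Vᴴ * (V * proj ξ * Vᴴ) * V := by rw [hξ]
        _ = (Vᴴ * V) * proj ξ * (Vᴴ * V) := by simp [Matrix.mul_assoc]
        _ = proj ξ := by rw [hVHV]; simp
    rw [← conj_proj, this]
  obtain ⟨a, ha⟩ := eigen_of_proj_eq _ _ hψ (key ψ h1)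
  obtain ⟨b, hb⟩ := eigen_of_proj_eq _ _ hφ (key φ h2)
  -- |a| = 1
  have hinnψ := unitary_inner W hWmem ψ ψ
  rw [ha, hψ] at hinnψ
  have haa : a * star a = 1 := by
    simpa [star_smul, smul_dotProduct, dotProduct_smul, hψ, mul_assoc] using hinnψ
  -- a = b from preserved inner product
  have hinn := unitary_inner W hWmem ψ φ
  rw [ha, hb] at hinn
  have hinn' : b * (star a * (star ψ ⬝ᵥ φ)) = star ψ ⬝ᵥ φ := by
    simpa [star_smul, smul_dotProduct, dotProduct_smul, mul_assoc] using hinn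
  have hab : star a * b = 1 :=
    mul_right_cancel₀ hno (by linear_combination hinn')
  have hba : b = a := by linear_combination a * hab - b * haa
  rw [hba] at hb
  -- ψ, φ linearly independent
  have hψne : ψ ≠ 0 := by intro h0; rw [h0] at hψ; simp at hψ
  have hli : LinearIndependent ℂ ![ψ, φ] := by
    rw [LinearIndependent.pair_iff]
    intro s t hst
    by_cases hts : t = 0
    · subst hts
      simp only [zero_smul, add_zero] at hst
      rcases smul_eq_zero.mp hst with h | h
      · exact ⟨h, rfl⟩
      · exact absurd h hψne
    · exfalso
      have hφeq : φ = (-(s/t)) • ψ := by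
        have hneg : t • φ = -(s • ψ) := by
          rw [eq_neg_iff_add_eq_zero, add_comm]; exact hst
        calc φ = t⁻¹ • (t • φ) := by rw [smul_smul, inv_mul_cancel₀ hts, one_smul]
          _ = t⁻¹ • -(s • ψ) := by rw [hneg]
          _ = (-(s/t)) • ψ := by
              rw [smul_neg, smul_smul, ← neg_smul]
              congr 1
              field_simp
      apply hne
      have hc : (-(s/t)) * star (-(s/t)) = 1 := by
        have := hφ
        rw [hφeq] at this
        simpa [star_smul, smul_dotProduct, dotProduct_smul, hψ, mul_assoc, mul_comm] using this
      rw [hφeq]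
      show Matrix.vecMulVec ψ (star ψ) = Matrix.vecMulVec ((-(s/t)) • ψ) (star ((-(s/t)) • ψ))
      ext i j
      simp only [Matrix.vecMulVec_apply, Pi.smul_apply, star_smul, Pi.star_apply,
        smul_eq_mul]
      have : (-(s/t)) * ψ i * (star (-(s/t)) * star (ψ j)) = ((-(s/t)) * star (-(s/t))) * (ψ i * star (ψ j)) := by ring
      rw [this, hc, one_mul]
  -- W = a • 1
  have hWa : W = a • (1 : Matrix (Fin 2) (Fin 2) ℂ) := by
    have hcard : Fintype.card (Fin 2) = Module.finrank ℂ (Fin 2 → ℂ) := by simp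
    let B := basisOfLinearIndependentOfCardEqFinrank hli hcard
    have hB : ⇑B = ![ψ, φ] := coe_basisOfLinearIndependentOfCardEqFinrank hli hcard
    apply Matrix.toLin'.injective
    apply B.ext
    intro i
    fin_cases i <;>
      simp [Matrix.toLin'_apply, hB, ha, hb, Matrix.smul_mulVec, Matrix.one_mulVec]
  -- conclude
  have hUaV : U = a • V := by
    have : V * W = U := by rw [hWdef, ← Matrix.mul_assoc, hVVH, Matrix.one_mul]
    rw [← this, hWa, Matrix.mul_smul, Matrix.mul_one]
  have hnorma : ‖a‖ = 1 := by
    have : ‖a‖ * ‖a‖ = 1 := by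
      have := congrArg norm haa
      simpa [norm_mul, norm_star] using this
    nlinarith [norm_nonneg a]
  refine ⟨⟨a, hnorma, hUaV⟩, fun ρ => ?_⟩
  rw [hUaV]
  rw [Matrix.smul_mul, Matrix.conjTranspose_smul, Matrix.mul_smul, Matrix.smul_mul,
    smul_smul]
  rw [show star a * a = 1 from by rw [mul_comm]; exact haa, one_smul]
end
end
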